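/- Let Ω ⊆ ℝ^m be a nonempty bounded open set, let a < b be real numbers, and let f : closure(Ω) × [a,b] → ℝ be continuous with f ≤ 0 on closure(Ω) × {a} and f ≤ 0 on frontier(Ω) × [a,b]. Suppose there exists C ∈ ℝ such that at every point (x₀,t₀) ∈ Ω × (a,b) where f(x₀,t₀) > 0, f satisfies ∂f/∂t − Δf − C·f ≤ 0 in the viscosity sense. Then f ≤ 0 on all of closure(Ω) × [a,b]. -/

import Mathlib

open Metric Set

/-- The Laplacian of a map between inner product spaces: the trace of the second
derivative, computed as a sum of second directional derivatives over an orthonormal basis. -/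
noncomputable def laplacian {E F : Type*} [NormedAddCommGroup E] [InnerProductSpace ℝ E]
    [FiniteDimensional ℝ E] [NormedAddCommGroup F] [NormedSpace ℝ F] (f : E → F) (x : E) : F :=
  ∑ i, iteratedFDeriv ℝ 2 f x ![stdOrthonormalBasis ℝ E i, stdOrthonormalBasis ℝ E i]

theorem laplacian_const {E F : Type*} [NormedAddCommGroup E] [InnerProductSpace ℝ E]
    [FiniteDimensional ℝ E] [NormedAddCommGroup F] [NormedSpace ℝ F] (c : F) (x : E) :
    laplacian (fun _ => c) x = 0 := by
  simp [laplacian, iteratedFDeriv_const_of_ne (two_ne_zero)]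

set_option maxHeartbeats 1000000

/-- Maximum principle for viscosity solutions: a continuous function that is nonpositive on
the parabolic boundary and satisfies `∂f/∂t − Δf − C·f ≤ 0` in the viscosity sense wherever
it is positive must be nonpositive everywhere. -/
theorem viscosity_maximum_principle
    {m : ℕ} (Ω : Set (EuclideanSpace ℝ (Fin m))) (hΩne : Ω.Nonempty) (hΩopen : IsOpen Ω)
    (hΩbdd : Bornology.IsBounded Ω)
    (a b : ℝ) (hab : a < b)
    (f : EuclideanSpace ℝ (Fin m) × ℝ → ℝ)
    (hf_cont : ContinuousOn f (closure Ω ×ˢ Icc a b))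
    (h_init : ∀ x ∈ closure Ω, f (x, a) ≤ 0)
    (h_bdry : ∀ x ∈ frontier Ω, ∀ t ∈ Icc a b, f (x, t) ≤ 0)
    (C : ℝ)
    (h_visc : ∀ x₀ ∈ Ω, ∀ t₀ ∈ Ioo a b, 0 < f (x₀, t₀) →
      ∀ (φ : EuclideanSpace ℝ (Fin m) × ℝ → ℝ) (U : Set (EuclideanSpace ℝ (Fin m) × ℝ)),
        U ∈ nhds (x₀, t₀) → U ⊆ Ω ×ˢ Ioo a b → ContDiffOn ℝ 2 φ U →
        φ (x₀, t₀) = f (x₀, t₀) → (∀ p ∈ U, f p ≤ φ p) →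
        deriv (fun s => φ (x₀, s)) t₀ - laplacian (fun y => φ (y, t₀)) x₀
          - C * φ (x₀, t₀) ≤ 0) :
    ∀ x ∈ closure Ω, ∀ t ∈ Icc a b, f (x, t) ≤ 0 := by
  by_contra hcon
  push_neg at hcon
  obtain ⟨x₁, hx₁, tb, htb, hfpos⟩ := hcon
  obtain ⟨l, hl⟩ : ∃ l : ℝ, l = C + 1 := ⟨_, rfl⟩
  have hclK : IsCompact (closure Ω) := hΩbdd.isCompact_closure
  have hKcpt : IsCompact (closure Ω ×ˢ Icc a b) := hclK.prod isCompact_Icc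
  -- find a time t₁ < b at which f (x₁, t₁) > 0
  obtain ⟨t₁, ht₁ab, ht₁b, hf1⟩ : ∃ t₁, t₁ ∈ Icc a b ∧ t₁ < b ∧ 0 < f (x₁, t₁) := by
    rcases lt_or_eq_of_le htb.2 with h | h
    · exact ⟨tb, htb, h, hfpos⟩
    · rw [h] at hfpos
      have hF : ContinuousOn (fun t => f (x₁, t)) (Icc a b) := by
        apply hf_cont.comp (Continuous.continuousOn (by fun_prop))
        intro t ht; exact ⟨hx₁, ht⟩
      have hFb : Filter.Tendsto (fun t => f (x₁, t)) (nhdsWithin b (Ioo a b)) (nhds (f (x₁, b))) :=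
        (hF b ⟨hab.le, le_rfl⟩).mono_left (nhdsWithin_mono _ (fun t ht => ⟨ht.1.le, ht.2.le⟩))
      have hne : (nhdsWithin b (Ioo a b)).NeBot := by
        apply mem_closure_iff_nhdsWithin_neBot.mp
        rw [closure_Ioo hab.ne]
        exact ⟨hab.le, le_refl _⟩
      have hev : ∀ᶠ t in nhdsWithin b (Ioo a b), 0 < f (x₁, t) :=
        hFb.eventually (eventually_gt_nhds hfpos)
      have hev2 : ∀ᶠ t in nhdsWithin b (Ioo a b), t ∈ Ioo a b := self_mem_nhdsWithin
      obtain ⟨t₁, h1, h2⟩ := (hev.and hev2).exists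
      exact ⟨t₁, ⟨h2.1.le, h2.2.le⟩, h2.2, h1⟩
  -- a bound S for the (exponentially weighted) function on the compact set
  obtain ⟨S, hS⟩ := hKcpt.exists_bound_of_continuousOn
    (f := fun p => Real.exp (-(l * (p.2 - a))) * f p)
    (((Real.continuous_exp.comp (by fun_prop)).continuousOn).mul hf_cont)
  have hx₁t₁K : (x₁, t₁) ∈ closure Ω ×ˢ Icc a b := ⟨hx₁, ht₁ab⟩
  have hS0 : 0 ≤ S := le_trans (norm_nonneg _) (hS _ hx₁t₁K)
  have hSbd : ∀ p ∈ closure Ω ×ˢ Icc a b, Real.exp (-(l * (p.2 - a))) * f p ≤ S := by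
    intro p hp
    exact le_trans (le_abs_self _) (hS p hp)
  -- the small parameter ε
  obtain ⟨ε, hε⟩ : ∃ ε : ℝ, ε = (b - t₁) * (Real.exp (-(l * (t₁ - a))) * f (x₁, t₁)) / 2 :=
    ⟨_, rfl⟩
  have hεpos : 0 < ε := by
    rw [hε]
    apply div_pos (mul_pos (by linarith) (mul_pos (Real.exp_pos _) hf1)) two_pos
  -- the cutoff time b'
  obtain ⟨b', hb'⟩ : ∃ b' : ℝ, b' = max (b - ε / (S + 1)) ((t₁ + b) / 2) := ⟨_, rfl⟩
  have hb'b : b' < b := by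
    rw [hb']
    apply max_lt
    · have : 0 < ε / (S + 1) := div_pos hεpos (by linarith)
      linarith
    · linarith
  have ht₁b' : t₁ < b' := by
    rw [hb']
    exact lt_of_lt_of_le (by linarith) (le_max_right _ _)
  have hb'a : a ≤ b' := le_trans ht₁ab.1 ht₁b'.le
  have hεb' : S + 1 ≤ ε / (b - b') := by
    rw [le_div_iff₀ (by linarith)]
    have h1 : b - b' ≤ ε / (S + 1) := by
      have h2 := le_max_left (b - ε / (S + 1)) ((t₁ + b) / 2)
      rw [← hb'] at h2
      linarith
    calc (S + 1) * (b - b') ≤ (S + 1) * (ε / (S + 1)) := by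
          apply mul_le_mul_of_nonneg_left h1 (by linarith)
      _ = ε := by field_simp
  -- maximize the penalized function on the compact set closure Ω × [a, b']
  have hKb'cpt : IsCompact (closure Ω ×ˢ Icc a b') := hclK.prod isCompact_Icc
  have hKb'sub : closure Ω ×ˢ Icc a b' ⊆ closure Ω ×ˢ Icc a b :=
    prod_mono_right (Icc_subset_Icc le_rfl hb'b.le)
  have hgcont : ContinuousOn
      (fun p : EuclideanSpace ℝ (Fin m) × ℝ =>
        Real.exp (-(l * (p.2 - a))) * f p - ε / (b - p.2)) (closure Ω ×ˢ Icc a b') := by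
    apply ContinuousOn.sub
    · exact ((Real.continuous_exp.comp (by fun_prop)).continuousOn).mul (hf_cont.mono hKb'sub)
    · apply ContinuousOn.div continuousOn_const (by fun_prop)
      intro p hp
      have : p.2 ≤ b' := hp.2.2
      intro h0; linarith [hb'b]
  obtain ⟨⟨x₀, t₀⟩, hp₀K, hmax⟩ :=
    hKb'cpt.exists_isMaxOn ⟨(x₁, t₁), hx₁, ht₁ab.1, ht₁b'.le⟩ hgcont
  have hx₀cl : x₀ ∈ closure Ω := hp₀K.1
  have ht₀ab' : t₀ ∈ Icc a b' := hp₀K.2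
  have hmax' : ∀ x t, x ∈ closure Ω → t ∈ Icc a b' →
      Real.exp (-(l * (t - a))) * f (x, t) - ε / (b - t) ≤
        Real.exp (-(l * (t₀ - a))) * f (x₀, t₀) - ε / (b - t₀) := by
    intro x t hx ht
    exact hmax (a := (x, t)) ⟨hx, ht⟩
  obtain ⟨M₀, hM₀⟩ : ∃ M : ℝ,
      M = Real.exp (-(l * (t₀ - a))) * f (x₀, t₀) - ε / (b - t₀) := ⟨_, rfl⟩
  have hM₀pos : 0 < M₀ := by
    have h1 := hmax' x₁ t₁ hx₁ ⟨ht₁ab.1, ht₁b'.le⟩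
    have hbt₁ : b - t₁ ≠ 0 := by intro h0; linarith
    have h2 : ε / (b - t₁) = Real.exp (-(l * (t₁ - a))) * f (x₁, t₁) / 2 := by
      rw [hε]; field_simp
    have h3 := mul_pos (Real.exp_pos (-(l * (t₁ - a)))) hf1
    rw [hM₀]
    rw [h2] at h1
    linarith
  -- t₀ < b'
  have ht₀b' : t₀ < b' := by
    rcases lt_or_eq_of_le ht₀ab'.2 with h | h
    · exact h
    · exfalso
      have h1 : Real.exp (-(l * (t₀ - a))) * f (x₀, t₀) ≤ S :=
        hSbd (x₀, t₀) (hKb'sub hp₀K)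
      have h2 : S + 1 ≤ ε / (b - t₀) := by rw [h]; exact hεb'
      rw [hM₀] at hM₀pos
      linarith
  have ht₀b : t₀ < b := ht₀b'.trans hb'b
  have hbt₀ : 0 < b - t₀ := by linarith
  -- f (x₀, t₀) > 0
  have hfx₀ : 0 < f (x₀, t₀) := by
    have h1 : 0 < ε / (b - t₀) := div_pos hεpos hbt₀
    by_contra hneg
    push_neg at hneg
    have h2 : Real.exp (-(l * (t₀ - a))) * f (x₀, t₀) ≤ 0 :=
      mul_nonpos_of_nonneg_of_nonpos (Real.exp_pos _).le hneg
    rw [hM₀] at hM₀pos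
    linarith
  -- t₀ > a
  have ht₀a : a < t₀ := by
    rcases lt_or_eq_of_le ht₀ab'.1 with h | h
    · exact h
    · exfalso
      have h1 := h_init x₀ hx₀cl
      rw [h] at h1
      linarith
  -- x₀ ∈ Ω
  have hx₀Ω : x₀ ∈ Ω := by
    by_contra hx
    have hfr : x₀ ∈ frontier Ω := by
      rw [frontier, hΩopen.interior_eq]
      exact ⟨hx₀cl, hx⟩
    have := h_bdry x₀ hfr t₀ ⟨ht₀a.le, ht₀b.le⟩
    linarith
  -- the test function
  have hUnhds : Ω ×ˢ Ioo a b ∈ nhds (x₀, t₀) :=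
    (hΩopen.prod isOpen_Ioo).mem_nhds ⟨hx₀Ω, ht₀a, ht₀b⟩
  have hφsmooth : ContDiffOn ℝ 2
      (fun p : EuclideanSpace ℝ (Fin m) × ℝ =>
        Real.exp (l * (p.2 - a)) * (M₀ + ε / (b - p.2))) (Ω ×ˢ Ioo a b) := by
    apply ContDiffOn.mul
    · exact (Real.contDiff_exp.comp
        ((contDiff_const.mul (contDiff_snd.sub contDiff_const)))).contDiffOn
    · apply ContDiffOn.add contDiffOn_const
      apply ContDiffOn.div contDiffOn_const
      · exact (contDiff_const.sub contDiff_snd).contDiffOn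
      · intro p hp
        have : p.2 < b := hp.2.2
        intro h0; linarith
  -- equality at the max point
  have hφeq : Real.exp (l * (t₀ - a)) * (M₀ + ε / (b - t₀)) = f (x₀, t₀) := by
    rw [hM₀, Real.exp_neg]
    have h0 := Real.exp_pos (l * (t₀ - a))
    field_simp
    ring
  -- f ≤ φ on U
  have hφge : ∀ p ∈ (Ω ×ˢ Ioo a b : Set (EuclideanSpace ℝ (Fin m) × ℝ)),
      f p ≤ Real.exp (l * (p.2 - a)) * (M₀ + ε / (b - p.2)) := by
    rintro ⟨x, t⟩ ⟨hxΩ, hta, htb2⟩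
    have hxcl : x ∈ closure Ω := subset_closure hxΩ
    have hta' : a < t := hta
    have htb' : t < b := htb2
    have hbt : 0 < b - t := by linarith
    have key : Real.exp (-(l * (t - a))) * f (x, t) ≤ M₀ + ε / (b - t) := by
      rcases le_or_gt t b' with h | h
      · have h1 := hmax' x t hxcl ⟨hta'.le, h⟩
        rw [← hM₀] at h1
        linarith
      · have h1 : Real.exp (-(l * (t - a))) * f (x, t) ≤ S :=
          hSbd (x, t) ⟨hxcl, hta'.le, htb'.le⟩
        have h2 : ε / (b - b') ≤ ε / (b - t) := by
          apply div_le_div_of_nonneg_left hεpos.le hbt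
          linarith
        linarith
    have hexp : 0 < Real.exp (l * (t - a)) := Real.exp_pos _
    rw [Real.exp_neg] at key
    calc f (x, t) = Real.exp (l * (t - a)) * ((Real.exp (l * (t - a)))⁻¹ * f (x, t)) := by
          field_simp
      _ ≤ Real.exp (l * (t - a)) * (M₀ + ε / (b - t)) :=
          mul_le_mul_of_nonneg_left key hexp.le
  -- apply the viscosity hypothesis
  have hv := h_visc x₀ hx₀Ω t₀ ⟨ht₀a, ht₀b⟩ hfx₀
    (fun p => Real.exp (l * (p.2 - a)) * (M₀ + ε / (b - p.2)))
    (Ω ×ˢ Ioo a b) hUnhds subset_rfl hφsmooth hφeq hφge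
  -- the Laplacian term vanishes
  have hlap : laplacian
      (fun y : EuclideanSpace ℝ (Fin m) =>
        Real.exp (l * (t₀ - a)) * (M₀ + ε / (b - t₀))) x₀ = 0 := laplacian_const _ _
  -- compute the time derivative
  have hD : HasDerivAt (fun s : ℝ => Real.exp (l * (s - a)) * (M₀ + ε / (b - s)))
      (Real.exp (l * (t₀ - a)) * l * (M₀ + ε / (b - t₀))
        + Real.exp (l * (t₀ - a)) * (ε * ((b - t₀) ^ 2)⁻¹)) t₀ := by
    have h2 : HasDerivAt (fun s : ℝ => Real.exp (l * (s - a)))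
        (Real.exp (l * (t₀ - a)) * l) t₀ := by
      have h := (((hasDerivAt_id' t₀).sub_const a).const_mul l).exp
      simpa using h
    have h3 : HasDerivAt (fun s : ℝ => b - s) (-1) t₀ := by
      simpa using (hasDerivAt_id' t₀).const_sub b
    have h5 : HasDerivAt (fun s : ℝ => M₀ + ε * (b - s)⁻¹) (ε * ((b - t₀) ^ 2)⁻¹) t₀ := by
      have h4 := (h3.inv hbt₀.ne').const_mul ε
      refine ((hasDerivAt_const t₀ M₀).add h4).congr_deriv ?_
      ring
    have h6 := h2.mul h5
    have h7 : (fun s : ℝ => Real.exp (l * (s - a)) * (M₀ + ε / (b - s)))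
        = fun s : ℝ => Real.exp (l * (s - a)) * (M₀ + ε * (b - s)⁻¹) := by
      funext s; rw [div_eq_mul_inv]
    rw [h7]
    refine h6.congr_deriv ?_
    ring
  have hderiv : deriv (fun s : ℝ => Real.exp (l * (s - a)) * (M₀ + ε / (b - s))) t₀
      = Real.exp (l * (t₀ - a)) * l * (M₀ + ε / (b - t₀))
        + Real.exp (l * (t₀ - a)) * (ε * ((b - t₀) ^ 2)⁻¹) := hD.deriv
  beta_reduce at hv
  rw [hderiv, hlap] at hv
  -- derive the contradiction
  have hexp : 0 < Real.exp (l * (t₀ - a)) := Real.exp_pos _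
  have hQ : 0 < M₀ + ε / (b - t₀) := by positivity
  have h1 : 0 < Real.exp (l * (t₀ - a)) * (ε * ((b - t₀) ^ 2)⁻¹) := by
    have : (0:ℝ) < ((b - t₀) ^ 2)⁻¹ := by positivity
    positivity
  have key : Real.exp (l * (t₀ - a)) * l * (M₀ + ε / (b - t₀))
      - C * (Real.exp (l * (t₀ - a)) * (M₀ + ε / (b - t₀)))
      = Real.exp (l * (t₀ - a)) * (M₀ + ε / (b - t₀)) := by
    rw [hl]; ring
  linarith [mul_pos hexp hQ, h1, key, hv]
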